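/- Suppose X₀, X₁, X₂ satisfy X₁X₀ = X₁+X₀, X₁X₂ = X₂, X₂X₀ = (1/w)X₂, and boundary conditions X₁|V⟩ = (1/β)|V⟩, ⟨W|X₀ = (1/w)⟨W|, ⟨W|X₂ = z⟨W|. Define X₁' = X₁ and X₀' = X₀ + X₂. Then X₁'X₀' = X₁' + X₀', X₁'|V⟩ = (1/β)|V⟩, and ⟨W|X₀' = ((1+wz)/w)⟨W|. That is, the primed matrices satisfy the algebra of a one-species open TASEP with entry rate α = w/(1+wz) and exit rate β. -/

import Mathlib

/-- Reduction of the `v = 1` two-species algebra to a one-species TASEP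
algebra: if `X₁X₀ = X₁+X₀`, `X₁X₂ = X₂`, `X₂X₀ = (1/w)X₂`,
`X₁|V⟩ = (1/β)|V⟩`, `⟨W|X₀ = (1/w)⟨W|`, `⟨W|X₂ = z⟨W|`, then
`X₁' := X₁` and `X₀' := X₀ + X₂` satisfy `X₁'X₀' = X₁' + X₀'`,
`X₁'|V⟩ = (1/β)|V⟩`, and `⟨W|X₀' = ((1+wz)/w)⟨W|`, i.e. the algebra of an
open one-species TASEP with entry rate `w/(1+wz)` and exit rate `β`. -/
theorem reduced_one_species_algebra {V : Type*} [AddCommGroup V] [Module ℝ V]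
    (X₀ X₁ X₂ : V →ₗ[ℝ] V) (W : V →ₗ[ℝ] ℝ) (Vv : V) (w β z : ℝ)
    (hw : w ≠ 0) (hβ : β ≠ 0)
    (h10 : X₁ ∘ₗ X₀ = X₁ + X₀)
    (h12 : X₁ ∘ₗ X₂ = X₂)
    (h20 : X₂ ∘ₗ X₀ = (1 / w) • X₂)
    (hV : X₁ Vv = (1 / β) • Vv)
    (hW0 : W ∘ₗ X₀ = (1 / w) • W)
    (hW2 : W ∘ₗ X₂ = z • W) :
    X₁ ∘ₗ (X₀ + X₂) = X₁ + (X₀ + X₂) ∧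
    X₁ Vv = (1 / β) • Vv ∧
    W ∘ₗ (X₀ + X₂) = ((1 + w * z) / w) • W := by
  refine ⟨?_, hV, ?_⟩
  · rw [LinearMap.comp_add, h10, h12, add_assoc]
  · rw [LinearMap.comp_add, hW0, hW2, ← add_smul]
    congr 1
    field_simp
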